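/- Let c : ℤ → ℤ be finitely supported such that the sum of c_i over odd indices i is even and Σ_{3 ∤ i} c_i = 0. For k ≥ 1 let n_k denote the 3-adic valuation of k and set v_{2k} = S_{2k}/(2·3^{n_k+1}) where S_{2k} = Σ_i c_i · i^{2k} (an integer, since 2·3^{n_k+1} ∣ S_{2k}). Then v_{2k} ≡ v_{2k+2} (mod 2) for all k ≥ 1. -/

import Mathlib

lemma sum_sub_filter_dvd (c : ℤ →₀ ℤ) (m : ℤ) (P : ℤ → Prop) [DecidablePred P] (e : ℕ)
    (h1 : ∀ i : ℤ, P i → m ∣ i ^ e - 1) (h0 : ∀ i : ℤ, ¬ P i → m ∣ i ^ e) :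
    m ∣ (∑ i ∈ c.support, c i * i ^ e) - ∑ i ∈ c.support.filter P, c i := by
  rw [Finset.sum_filter, ← Finset.sum_sub_distrib]
  refine Finset.dvd_sum fun i _ => ?_
  by_cases h : P i
  · simp only [h, if_pos]
    have : c i * i ^ e - c i = c i * (i ^ e - 1) := by ring
    rw [this]
    exact Dvd.dvd.mul_left (h1 i h) _
  · simp only [h, if_neg, not_false_iff, sub_zero]
    exact Dvd.dvd.mul_left (h0 i h) _

lemma pow_cong_one (i : ℤ) (hi : ¬ (3:ℤ) ∣ i) (n k : ℕ) (hnk : 3 ^ n ∣ k) :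
    (3:ℤ) ^ (n+1) ∣ i ^ (2*k) - 1 := by
  obtain ⟨s, rfl⟩ := hnk
  have hcop : Nat.Coprime i.natAbs (3 ^ (n+1)) := by
    refine Nat.Coprime.pow_right _ ?_
    have h3 : ¬ (3 : ℕ) ∣ i.natAbs := by
      rw [← Int.natCast_dvd_natCast]
      simpa using hi
    exact (((Nat.prime_three).coprime_iff_not_dvd).mpr h3).symm
  have htot : (3 ^ (n+1) : ℕ).totient = 3 ^ n * 2 := by
    rw [Nat.totient_prime_pow Nat.prime_three (Nat.succ_pos n)]
    simp
  have hmod : i.natAbs ^ (2 * (3 ^ n * s)) ≡ 1 [MOD 3 ^ (n+1)] := by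
    have := (Nat.ModEq.pow_totient hcop).pow s
    rw [one_pow, ← pow_mul, htot] at this
    calc i.natAbs ^ (2 * (3 ^ n * s)) = i.natAbs ^ (3 ^ n * 2 * s) := by ring_nf
    _ ≡ 1 [MOD 3 ^ (n+1)] := this
  have hint : ((i.natAbs : ℤ)) ^ (2 * (3 ^ n * s)) ≡ 1 [ZMOD (3 ^ (n+1) : ℕ)] := by
    have := Int.natCast_modEq_iff.mpr hmod
    push_cast at this ⊢
    exact this
  have habs : ((i.natAbs : ℤ)) ^ (2 * (3 ^ n * s)) = i ^ (2 * (3 ^ n * s)) := by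
    rw [pow_mul, pow_mul, Int.natAbs_sq, ← pow_mul, ← pow_mul]
  rw [habs] at hint
  have h := Int.ModEq.dvd hint.symm
  have hc : ((3 ^ (n+1) : ℕ) : ℤ) = (3:ℤ) ^ (n+1) := by push_cast; ring
  rwa [hc] at h

lemma S_dvd (c : ℤ →₀ ℤ)
    (hodd : 2 ∣ ∑ i ∈ c.support.filter (fun i => Odd i), c i)
    (h3 : ∑ i ∈ c.support.filter (fun i => ¬ (3 : ℤ) ∣ i), c i = 0)
    (k : ℕ) (hk : 1 ≤ k) :
    (2 * 3 ^ (padicValNat 3 k + 1) : ℤ) ∣ ∑ i ∈ c.support, c i * i ^ (2 * k) := by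
  set n := padicValNat 3 k with hn
  have hdvd : 3 ^ n ∣ k := pow_padicValNat_dvd
  have hkn : n + 1 ≤ 2 * k := by
    have h1 : n < 3 ^ n := Nat.lt_pow_self (by norm_num)
    have h2 : 3 ^ n ≤ k := Nat.le_of_dvd (by omega) hdvd
    omega
  have h3dvd : (3:ℤ) ^ (n+1) ∣ ∑ i ∈ c.support, c i * i ^ (2 * k) := by
    have := sum_sub_filter_dvd c ((3:ℤ)^(n+1)) (fun i => ¬ (3:ℤ) ∣ i) (2*k)
      (fun i hi => pow_cong_one i hi n k hdvd)
      (fun i hi =>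
        dvd_trans (pow_dvd_pow 3 hkn) (pow_dvd_pow_of_dvd (not_not.mp hi) (2*k)))
    rwa [h3, sub_zero] at this
  have h2dvd : (2:ℤ) ∣ ∑ i ∈ c.support, c i * i ^ (2 * k) := by
    have := sum_sub_filter_dvd c 2 (fun i => Odd i) (2*k)
      (fun i hi => by
        obtain ⟨j, hj⟩ := hi.pow (n := 2*k)
        exact ⟨j, by omega⟩)
      (fun i hi => by
        rw [Int.not_odd_iff_even] at hi
        exact dvd_pow hi.two_dvd (by omega))
    omega
  have hcop : IsCoprime (2:ℤ) (3 ^ (n+1)) := by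
    refine IsCoprime.pow_right ?_
    rw [Int.isCoprime_iff_gcd_eq_one]; decide
  exact hcop.mul_dvd h2dvd h3dvd

lemma S_mod4 (c : ℤ →₀ ℤ) (k : ℕ) (hk : 1 ≤ k) :
    (4:ℤ) ∣ (∑ i ∈ c.support, c i * i ^ (2 * (k+1))) - ∑ i ∈ c.support, c i * i ^ (2 * k) := by
  rw [← Finset.sum_sub_distrib]
  refine Finset.dvd_sum fun i _ => ?_
  have key : (4:ℤ) ∣ i ^ (2*(k+1)) - i ^ (2*k) := by
    have hfac : i ^ (2*(k+1)) - i ^ (2*k) = i ^ (2*k) * (i^2 - 1) := by ring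
    rw [hfac]
    rcases Int.even_or_odd i with he | ho
    · obtain ⟨j, rfl⟩ := he
      have h4 : (4:ℤ) ∣ (j+j)^2 := ⟨j^2, by ring⟩
      exact Dvd.dvd.mul_right (dvd_trans h4 (pow_dvd_pow _ (by omega))) _
    · obtain ⟨j, rfl⟩ := ho
      exact Dvd.dvd.mul_left ⟨j^2 + j, by ring⟩ _
  have : c i * i ^ (2*(k+1)) - c i * i ^ (2*k) = c i * (i ^ (2*(k+1)) - i ^ (2*k)) := by ring
  rw [this]
  exact key.mul_left _

/-- If `c : ℤ → ℤ` is finitely supported, the sum of `c_i` over odd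
indices is even and `Σ_{3 ∤ i} c_i = 0`, then with
`v_{2k} = S_{2k}/(2·3^{v₃(k)+1})` where `S_{2k} = Σ_i c_i i^{2k}` (an integer by
the divisibility `2·3^{v₃(k)+1} ∣ S_{2k}`), one has `v_{2k} ≡ v_{2k+2} (mod 2)`
for all `k ≥ 1`. -/
theorem v_two_k_mod_two (c : ℤ →₀ ℤ)
    (hodd : 2 ∣ ∑ i ∈ c.support.filter (fun i => Odd i), c i)
    (h3 : ∑ i ∈ c.support.filter (fun i => ¬ (3 : ℤ) ∣ i), c i = 0)
    (k : ℕ) (hk : 1 ≤ k) :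
    ((∑ i ∈ c.support, c i * i ^ (2 * k)) / (2 * 3 ^ (padicValNat 3 k + 1)))
      ≡ ((∑ i ∈ c.support, c i * i ^ (2 * (k + 1))) /
          (2 * 3 ^ (padicValNat 3 (k + 1) + 1))) [ZMOD 2] := by
  obtain ⟨v, hv⟩ := S_dvd c hodd h3 k hk
  obtain ⟨w, hw⟩ := S_dvd c hodd h3 (k+1) (by omega)
  set N := padicValNat 3 k + 1
  set M := padicValNat 3 (k+1) + 1
  rw [hv, hw, Int.mul_ediv_cancel_left _ (by positivity), Int.mul_ediv_cancel_left _ (by positivity)]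
  have h4 := S_mod4 c k hk
  rw [hv, hw] at h4
  have h2 : (2:ℤ) ∣ 3 ^ M * w - 3 ^ N * v := by
    obtain ⟨t, ht⟩ := h4
    exact ⟨t, by linarith⟩
  have e3 : ((3:ℤ)) ≡ 1 [ZMOD 2] := by decide
  have eN : (3:ℤ) ^ N * v ≡ v [ZMOD 2] := by
    calc (3:ℤ) ^ N * v ≡ 1 ^ N * v [ZMOD 2] := (e3.pow N).mul_right v
    _ = v := by ring
  have eM : (3:ℤ) ^ M * w ≡ w [ZMOD 2] := by
    calc (3:ℤ) ^ M * w ≡ 1 ^ M * w [ZMOD 2] := (e3.pow M).mul_right w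
    _ = w := by ring
  have eNM : (3:ℤ) ^ N * v ≡ 3 ^ M * w [ZMOD 2] := Int.modEq_iff_dvd.mpr h2
  exact eN.symm.trans (eNM.trans eM)
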